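/- Let ε > 0, δ ∈ (0, 1), and Δ > 0. Let P_i and P_j be probability measures on ℝ and let π be a coupling of P_i and P_j such that |x − x'| ≤ Δ for π-almost every pair (x, x'). Let c > 0.42·δ^(−1/3) + √((0.42·δ^(−1/3))² + ε/2) and θ = (Δ/ε)·c, and for s ∈ {i, j} let Q_s be the law of X + N where X has law P_s and N is an independent centered Gaussian random variable with standard deviation θ. Then for every Borel set A ⊆ ℝ, Q_i(A) ≤ exp(ε)·Q_j(A) + δ and Q_j(A) ≤ exp(ε)·Q_i(A) + δ. -/

import Mathlib

open MeasureTheory ProbabilityTheory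
open Real Set Filter
open scoped NNReal ENNReal


lemma tail_aux {b τ : ℝ} (hb : 0 < b) (hτ : 0 < τ) :
    ∫ s in Set.Ioi τ, Real.exp (-b * s^2) ≤ (2*b*τ)⁻¹ * Real.exp (-b * τ^2) := by
  have hderiv : ∀ s ∈ Set.Ici τ, HasDerivAt (fun s : ℝ => -(2*b)⁻¹ * Real.exp (-b*s^2))
      (s * Real.exp (-b*s^2)) s := by
    intro s _
    have h1 : HasDerivAt (fun s : ℝ => -b*s^2) (-b*(2*s^1)) s :=
      (hasDerivAt_pow 2 s).const_mul (-b)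
    have h2 := (h1.exp).const_mul (-(2*b)⁻¹)
    refine h2.congr_deriv ?_
    field_simp
  have htendsto : Tendsto (fun s : ℝ => -(2*b)⁻¹ * Real.exp (-b*s^2)) atTop (nhds 0) := by
    have h1 : Tendsto (fun s : ℝ => -b*s^2) atTop atBot := by
      exact Tendsto.const_mul_atTop_of_neg (neg_lt_zero.mpr hb)
        (tendsto_pow_atTop (two_ne_zero))
    have h2 : Tendsto (fun s : ℝ => Real.exp (-b*s^2)) atTop (nhds 0) :=
      Real.tendsto_exp_atBot.comp h1
    have := h2.const_mul (-(2*b)⁻¹)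
    simpa using this
  have hint : IntegrableOn (fun s : ℝ => s * Real.exp (-b*s^2)) (Set.Ioi τ) :=
    (integrable_mul_exp_neg_mul_sq hb).integrableOn
  have key := integral_Ioi_of_hasDerivAt_of_tendsto' hderiv hint htendsto
  -- key : ∫ s in Ioi τ, s * exp (-b*s^2) = 0 - (-(2*b)⁻¹ * exp (-b*τ^2))
  have key2 : ∫ s in Set.Ioi τ, s * Real.exp (-b*s^2) = (2*b)⁻¹ * Real.exp (-b*τ^2) := by
    rw [key]; ring
  have hmono : ∫ s in Set.Ioi τ, Real.exp (-b * s^2)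
      ≤ ∫ s in Set.Ioi τ, τ⁻¹ * (s * Real.exp (-b*s^2)) := by
    refine setIntegral_mono_on (integrable_exp_neg_mul_sq hb).integrableOn
      (hint.const_mul _) measurableSet_Ioi ?_
    intro s hs
    rw [Set.mem_Ioi] at hs
    have hs0 : 0 < s := hτ.trans hs
    have h1 : (1:ℝ) ≤ τ⁻¹ * s := by
      rw [inv_mul_eq_div, le_div_iff₀ hτ, one_mul]
      exact hs.le
    nlinarith [Real.exp_pos (-b*s^2), Real.exp_pos (-b*s^2)]
  calc ∫ s in Set.Ioi τ, Real.exp (-b * s^2)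
      ≤ ∫ s in Set.Ioi τ, τ⁻¹ * (s * Real.exp (-b*s^2)) := hmono
    _ = τ⁻¹ * ((2*b)⁻¹ * Real.exp (-b*τ^2)) := by rw [integral_const_mul, key2]
    _ = (2*b*τ)⁻¹ * Real.exp (-b * τ^2) := by field_simp

lemma gauss_tail {σ k : ℝ} (hσ : 0 < σ) (hk : 0 < k) :
    gaussianReal 0 (Real.toNNReal (σ^2)) (Set.Ioi (k*σ))
      ≤ ENNReal.ofReal (Real.exp (-k^2/2) / (Real.sqrt (2*Real.pi) * k)) := by
  have hv : Real.toNNReal (σ^2) ≠ 0 := by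
    rw [ne_eq, Real.toNNReal_eq_zero, not_le]
    positivity
  rw [gaussianReal_apply_eq_integral _ hv]
  apply ENNReal.ofReal_le_ofReal
  have hcoe : ((Real.toNNReal (σ^2) : ℝ≥0) : ℝ) = σ^2 := Real.coe_toNNReal _ (sq_nonneg σ)
  have hb : (0:ℝ) < (2*σ^2)⁻¹ := by positivity
  have hτ : 0 < k*σ := by positivity
  have hpdf : ∀ s : ℝ, gaussianPDFReal 0 (Real.toNNReal (σ^2)) s
      = (Real.sqrt (2*Real.pi) * σ)⁻¹ * Real.exp (-(2*σ^2)⁻¹ * s^2) := by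
    intro s
    rw [gaussianPDFReal, hcoe]
    congr 1
    · rw [show 2*Real.pi*σ^2 = (2*Real.pi)*σ^2 by ring, Real.sqrt_mul (by positivity),
        Real.sqrt_sq hσ.le]
    · congr 1
      field_simp
      ring
  calc ∫ s in Set.Ioi (k*σ), gaussianPDFReal 0 (Real.toNNReal (σ^2)) s
      = (Real.sqrt (2*Real.pi) * σ)⁻¹ * ∫ s in Set.Ioi (k*σ), Real.exp (-(2*σ^2)⁻¹ * s^2) := by
        simp_rw [hpdf]; rw [integral_const_mul]
    _ ≤ (Real.sqrt (2*Real.pi) * σ)⁻¹ *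
        ((2*(2*σ^2)⁻¹*(k*σ))⁻¹ * Real.exp (-(2*σ^2)⁻¹ * (k*σ)^2)) := by
        refine mul_le_mul_of_nonneg_left (tail_aux hb hτ) (by positivity)
    _ = Real.exp (-k^2/2) / (Real.sqrt (2*Real.pi) * k) := by
        rw [show -(2*σ^2)⁻¹ * (k*σ)^2 = -k^2/2 by field_simp]
        have h2π : (0:ℝ) < Real.sqrt (2*Real.pi) := Real.sqrt_pos.mpr (by positivity)
        field_simp

lemma numeric {δ k : ℝ} (hδ0 : 0 < δ) (hk : 0.84 * δ ^ (-(1:ℝ)/3) ≤ k) :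
    Real.exp (-k^2/2) / (Real.sqrt (2*Real.pi) * k) ≤ δ := by
  have hd3 : (0:ℝ) < δ ^ (-(1:ℝ)/3) := Real.rpow_pos_of_pos hδ0 _
  have hk0 : (0:ℝ) < k := lt_of_lt_of_le (by positivity) hk
  have h1 : k^2/2 * Real.exp 1 ≤ Real.exp (k^2/2) := by
    have h := Real.add_one_le_exp (k^2/2 - 1)
    rw [Real.exp_sub] at h
    have h2 := mul_le_mul_of_nonneg_right h (Real.exp_pos 1).le
    rw [div_mul_cancel₀ _ (Real.exp_pos 1).ne'] at h2
    calc k^2/2 * Real.exp 1 = (k^2/2 - 1 + 1) * Real.exp 1 := by ring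
      _ ≤ Real.exp (k^2/2) := h2
  have h2 : Real.exp (-k^2/2) * Real.exp (k^2/2) = 1 := by
    rw [← Real.exp_add, show -k^2/2 + k^2/2 = 0 by ring, Real.exp_zero]
  have hexp : Real.exp (-k^2/2) ≤ (2 / Real.exp 1) / k^2 := by
    rw [div_div, le_div_iff₀ (by positivity)]
    have h3 := mul_le_mul_of_nonneg_left h1 (Real.exp_pos (-k^2/2)).le
    nlinarith [Real.exp_pos (-k^2/2)]
  have hsqrt : (2.5:ℝ) ≤ Real.sqrt (2*Real.pi) := by
    rw [show (2.5:ℝ) = Real.sqrt (2.5^2) by rw [Real.sqrt_sq]; norm_num]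
    exact Real.sqrt_le_sqrt (by nlinarith [Real.pi_gt_d6])
  have he : (2.7:ℝ) < Real.exp 1 := by
    have := Real.exp_one_gt_d9; linarith
  have hpow : (δ^(-(1:ℝ)/3))^(3:ℕ) = δ⁻¹ := by
    rw [← Real.rpow_natCast (δ^(-(1:ℝ)/3)) 3, ← Real.rpow_mul hδ0.le,
      show (-(1:ℝ)/3)*((3:ℕ):ℝ) = -1 by push_cast; ring, Real.rpow_neg_one]
  have hδk : (0.592704:ℝ) ≤ δ * k^3 := by
    have hcube : (0.84 * δ^(-(1:ℝ)/3))^(3:ℕ) ≤ k^3 := pow_le_pow_left₀ (by positivity) hk 3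
    have h : (0.592704:ℝ) * δ⁻¹ ≤ k^3 := by
      calc (0.592704:ℝ) * δ⁻¹ = (0.84 * δ^(-(1:ℝ)/3))^(3:ℕ) := by
            rw [mul_pow, hpow]; norm_num
        _ ≤ k^3 := hcube
    calc (0.592704:ℝ) = 0.592704 * δ⁻¹ * δ := by field_simp
      _ ≤ k^3 * δ := mul_le_mul_of_nonneg_right h hδ0.le
      _ = δ * k^3 := mul_comm _ _
  have h2e : 2 / Real.exp 1 ≤ (0.75:ℝ) := by
    rw [div_le_iff₀ (Real.exp_pos 1)]; linarith
  have hsq0 : (0:ℝ) < Real.sqrt (2*Real.pi) := by linarith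
  calc Real.exp (-k^2/2) / (Real.sqrt (2*Real.pi) * k)
      ≤ ((2 / Real.exp 1) / k^2) / (Real.sqrt (2*Real.pi) * k) := by gcongr
    _ = (2 / Real.exp 1) / (Real.sqrt (2*Real.pi) * k^3) := by
        field_simp
    _ ≤ δ := by
        rw [div_le_iff₀ (by positivity)]
        nlinarith [mul_le_mul hsqrt hδk (by norm_num) hsq0.le]


lemma shift_Ioi (v : ℝ≥0) (x τ : ℝ) :
    gaussianReal x v (Set.Ioi (x + τ)) = gaussianReal 0 v (Set.Ioi τ) := by
  have h := gaussianReal_map_add_const (μ := 0) (v := v) x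
  rw [zero_add] at h
  rw [← h, Measure.map_apply (measurable_add_const x) measurableSet_Ioi]
  congr 1
  ext t
  simp only [Set.mem_preimage, Set.mem_Ioi]
  constructor <;> intro h' <;> linarith

lemma neg_gauss (v : ℝ≥0) : (gaussianReal 0 v).map (fun t : ℝ => -t) = gaussianReal 0 v := by
  have h := gaussianReal_map_const_mul (μ := 0) (v := v) (-1)
  have h1 : (⟨((-1:ℝ))^2, sq_nonneg _⟩ : ℝ≥0) = 1 := by
    ext; norm_num
  simp only [neg_one_mul, mul_zero, h1, one_mul, neg_zero] at h
  rw [h]; congr 1; ext; simp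

lemma shift_Iio (v : ℝ≥0) (x τ : ℝ) :
    gaussianReal x v (Set.Iio (x - τ)) = gaussianReal 0 v (Set.Ioi τ) := by
  have h := gaussianReal_map_add_const (μ := 0) (v := v) x
  rw [zero_add] at h
  rw [← h, Measure.map_apply (measurable_add_const x) measurableSet_Iio]
  have hpre : (· + x) ⁻¹' (Set.Iio (x - τ)) = Set.Iio (-τ) := by
    ext t
    simp only [Set.mem_preimage, Set.mem_Iio]
    constructor <;> intro h' <;> linarith
  rw [hpre]
  conv_rhs => rw [← neg_gauss v]
  rw [Measure.map_apply measurable_neg measurableSet_Ioi]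
  congr 1
  ext t
  simp only [Set.mem_preimage, Set.mem_Ioi, Set.mem_Iio]
  constructor <;> intro h' <;> linarith

lemma halfline_aux {a u σ ε Δ : ℝ} (ha0 : 0 < a) (ha1 : a ≤ Δ) (hΔ : 0 < Δ)
    (hτ' : Δ^2 < 2*σ^2*ε) (hh : 2*σ^2*ε < a*(2*u+a)) : σ^2*ε/Δ - Δ/2 < u := by
  have hu : 0 < u := by nlinarith
  have h2 : σ^2*ε < (u + Δ/2)*Δ := by nlinarith [mul_nonneg (sub_nonneg.mpr ha1) hu.le]
  have h3 := (div_lt_iff₀ hΔ).mpr h2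
  linarith

lemma pointwise_priv {ε δ Δ σ τ : ℝ} (hε : 0 < ε) (hΔ : 0 < Δ) (hσ : 0 < σ)
    (hτdef : τ = σ^2*ε/Δ - Δ/2) (hτ : 0 < τ)
    (htail : gaussianReal 0 (Real.toNNReal (σ^2)) (Set.Ioi τ) ≤ ENNReal.ofReal δ)
    {x x' : ℝ} (hxx : |x - x'| ≤ Δ) {A : Set ℝ} (hA : MeasurableSet A) :
    gaussianReal x (Real.toNNReal (σ^2)) A
      ≤ ENNReal.ofReal (Real.exp ε) * gaussianReal x' (Real.toNNReal (σ^2)) A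
        + ENNReal.ofReal δ := by
  set v := Real.toNNReal (σ^2) with hvdef
  have hv : v ≠ 0 := by
    rw [hvdef, ne_eq, Real.toNNReal_eq_zero, not_le]; positivity
  have hcoe : ((v : ℝ≥0) : ℝ) = σ^2 := Real.coe_toNNReal _ (sq_nonneg σ)
  set G := {t : ℝ | gaussianPDFReal x v t ≤ Real.exp ε * gaussianPDFReal x' v t} with hGdef
  have hG : MeasurableSet G :=
    measurableSet_le (measurable_gaussianPDFReal x v)
      ((measurable_gaussianPDFReal x' v).const_mul _)
  -- step 1 : good part
  have step1 : gaussianReal x v (A ∩ G) ≤ ENNReal.ofReal (Real.exp ε) * gaussianReal x' v A := by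
    rw [gaussianReal_apply _ hv, gaussianReal_apply _ hv]
    calc ∫⁻ t in A ∩ G, gaussianPDF x v t
        ≤ ∫⁻ t in A ∩ G, ENNReal.ofReal (Real.exp ε) * gaussianPDF x' v t := by
          refine setLIntegral_mono ((measurable_gaussianPDF x' v).const_mul _) ?_
          intro t ht
          rw [gaussianPDF, gaussianPDF, ← ENNReal.ofReal_mul (Real.exp_pos ε).le]
          exact ENNReal.ofReal_le_ofReal ht.2
      _ = ENNReal.ofReal (Real.exp ε) * ∫⁻ t in A ∩ G, gaussianPDF x' v t :=
          lintegral_const_mul _ (measurable_gaussianPDF x' v)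
      _ ≤ ENNReal.ofReal (Real.exp ε) * ∫⁻ t in A, gaussianPDF x' v t :=
          mul_le_mul_of_nonneg_left (lintegral_mono_set Set.inter_subset_left) (by positivity)
  -- bad set characterization
  have habs : ∀ t, t ∉ G → 2*σ^2*ε < (x - x') * (2*t - x - x') := by
    intro t ht
    simp only [hGdef, Set.mem_setOf_eq, not_le] at ht
    rw [gaussianPDFReal, gaussianPDFReal, hcoe] at ht
    have hC : (0:ℝ) < (Real.sqrt (2*Real.pi*σ^2))⁻¹ := by positivity
    rw [mul_left_comm] at ht
    have h2' : Real.exp ε * Real.exp (-(t-x')^2/(2*σ^2)) < Real.exp (-(t-x)^2/(2*σ^2)) := by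
      have := (mul_lt_mul_iff_of_pos_left hC).mp ht
      exact this
    rw [← Real.exp_add] at h2'
    have h3 := Real.exp_lt_exp.mp h2'
    have hσ2 : (0:ℝ) < 2*σ^2 := by positivity
    have h4 := mul_lt_mul_of_pos_left h3 hσ2
    rw [mul_add, mul_div_cancel₀ _ hσ2.ne', mul_div_cancel₀ _ hσ2.ne'] at h4
    nlinarith [h4]
  have hτ' : Δ^2 < 2*σ^2*ε := by
    have h5 : Δ/2 < σ^2*ε/Δ := by linarith [hτ, hτdef ▸ hτ]
    have h6 := (lt_div_iff₀ hΔ).mp h5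
    nlinarith
  -- step 2 : bad part
  have step2 : gaussianReal x v (A \ G) ≤ ENNReal.ofReal δ := by
    rcases lt_trichotomy (x - x') 0 with hlt | heq | hgt
    · -- x < x' : bad set in Iio (x - τ)
      have hsub : A \ G ⊆ Set.Iio (x - τ) := by
        intro t ht
        have h := habs t ht.2
        have ha0 : 0 < x' - x := by linarith
        have ha1 : x' - x ≤ Δ := by
          have := abs_le.mp hxx; linarith [this.1]
        have hh : 2*σ^2*ε < (x' - x)*(2*(x - t)+(x' - x)) := by nlinarith [h]
        have := halfline_aux ha0 ha1 hΔ hτ' hh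
        simp only [Set.mem_Iio]
        rw [hτdef]
        linarith
      calc gaussianReal x v (A \ G) ≤ gaussianReal x v (Set.Iio (x - τ)) := measure_mono hsub
        _ = gaussianReal 0 v (Set.Ioi τ) := shift_Iio v x τ
        _ ≤ ENNReal.ofReal δ := htail
    · have hsub : A \ G ⊆ (∅ : Set ℝ) := by
        intro t ht
        have h := habs t ht.2
        rw [heq, zero_mul] at h
        exact absurd h (by nlinarith)
      calc gaussianReal x v (A \ G) ≤ gaussianReal x v ∅ := measure_mono hsub
        _ = 0 := measure_empty
        _ ≤ ENNReal.ofReal δ := zero_le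
    · have hsub : A \ G ⊆ Set.Ioi (x + τ) := by
        intro t ht
        have h := habs t ht.2
        have ha1 : x - x' ≤ Δ := (abs_le.mp hxx).2
        have hh : 2*σ^2*ε < (x - x')*(2*(t - x)+(x - x')) := by nlinarith [h]
        have := halfline_aux hgt ha1 hΔ hτ' hh
        simp only [Set.mem_Ioi]
        rw [hτdef]
        linarith
      calc gaussianReal x v (A \ G) ≤ gaussianReal x v (Set.Ioi (x + τ)) := measure_mono hsub
        _ = gaussianReal 0 v (Set.Ioi τ) := shift_Ioi v x τ
        _ ≤ ENNReal.ofReal δ := htail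
  calc gaussianReal x v A = gaussianReal x v (A ∩ G) + gaussianReal x v (A \ G) :=
        (measure_inter_add_diff A hG).symm
    _ ≤ ENNReal.ofReal (Real.exp ε) * gaussianReal x' v A + ENNReal.ofReal δ :=
        add_le_add step1 step2

/-- Theorem 3(b) — the Gaussian mechanism with standard deviation
`θ = (Δ/ε)·c`, where `c` exceeds the positive root of `c² − 0.84·δ^{-1/3}·c − ε/2`,
attains the δ-approximation of ε-pufferfish privacy (no restriction ε ≤ 1). -/
theorem gaussian_mechanism_pufferfish_general
    (ε δ Δ : ℝ) (hε : 0 < ε) (hδ0 : 0 < δ) (hδ1 : δ < 1) (hΔ : 0 < Δ)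
    (Pi Pj : Measure ℝ) [IsProbabilityMeasure Pi] [IsProbabilityMeasure Pj]
    (μc : Measure (ℝ × ℝ)) [IsProbabilityMeasure μc]
    (hfst : μc.map Prod.fst = Pi) (hsnd : μc.map Prod.snd = Pj)
    (hsupp : ∀ᵐ p ∂μc, |p.1 - p.2| ≤ Δ)
    (c : ℝ)
    (hc : c > 0.42 * δ ^ (-(1 : ℝ) / 3) +
      Real.sqrt ((0.42 * δ ^ (-(1 : ℝ) / 3)) ^ 2 + ε / 2))
    (θ : ℝ) (hθ : θ = (Δ / ε) * c)
    (Qi Qj : Measure ℝ)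
    (hQi : Qi = Pi.bind (fun x => gaussianReal x (Real.toNNReal (θ ^ 2))))
    (hQj : Qj = Pj.bind (fun x => gaussianReal x (Real.toNNReal (θ ^ 2)))) :
    ∀ A : Set ℝ, MeasurableSet A →
      Qi A ≤ ENNReal.ofReal (Real.exp ε) * Qj A + ENNReal.ofReal δ ∧
      Qj A ≤ ENNReal.ofReal (Real.exp ε) * Qi A + ENNReal.ofReal δ := by
  intro A hA
  -- numeric setup
  set b : ℝ := 0.42 * δ ^ (-(1 : ℝ) / 3) with hbdef
  have hd3 : (0:ℝ) < δ ^ (-(1:ℝ)/3) := Real.rpow_pos_of_pos hδ0 _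
  have hb0 : 0 < b := by rw [hbdef]; positivity
  have hc0 : 0 < c := lt_of_lt_of_le hb0 (le_trans (le_add_of_nonneg_right (Real.sqrt_nonneg _)) hc.le)
  have hσ : 0 < θ := by rw [hθ]; positivity
  set k : ℝ := c - ε/(2*c) with hkdef
  have hcb : Real.sqrt (b^2 + ε/2) < c - b := by linarith [hc]
  have hsq : b^2 + ε/2 < (c - b)^2 := by
    nlinarith [Real.sq_sqrt (show (0:ℝ) ≤ b^2 + ε/2 by positivity), Real.sqrt_nonneg (b^2 + ε/2)]
  have hquad : 0 < c^2 - 2*b*c - ε/2 := by nlinarith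
  have hk2b : 2*b < k := by
    rw [hkdef, show c - ε/(2*c) = (c^2 - ε/2)/c by field_simp, lt_div_iff₀ hc0]
    nlinarith
  have hk0 : 0 < k := by linarith
  set τ : ℝ := k * θ with hτdef'
  have hτ : 0 < τ := by rw [hτdef']; positivity
  have hτdef : τ = θ^2*ε/Δ - Δ/2 := by
    rw [hτdef', hkdef, hθ]
    field_simp
  have htail : gaussianReal 0 (Real.toNNReal (θ^2)) (Set.Ioi τ) ≤ ENNReal.ofReal δ := by
    calc gaussianReal 0 (Real.toNNReal (θ^2)) (Set.Ioi τ)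
        ≤ ENNReal.ofReal (Real.exp (-k^2/2) / (Real.sqrt (2*Real.pi) * k)) := by
          rw [hτdef']; exact gauss_tail hσ hk0
      _ ≤ ENNReal.ofReal δ := by
          refine ENNReal.ofReal_le_ofReal (numeric hδ0 ?_)
          rw [show (0.84:ℝ) * δ ^ (-(1:ℝ)/3) = 2*b by rw [hbdef]; ring]
          exact hk2b.le
  -- measurability
  set v : ℝ≥0 := Real.toNNReal (θ^2) with hvdef
  have hv : v ≠ 0 := by rw [hvdef, ne_eq, Real.toNNReal_eq_zero, not_le]; positivity
  have hmeasA : ∀ {B : Set ℝ}, MeasurableSet B → Measurable (fun x : ℝ => gaussianReal x v B) := by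
    intro B hB
    have hjoint : Measurable (Function.uncurry fun (x t : ℝ) => gaussianPDF x v t) := by
      apply Measurable.ennreal_ofReal
      exact ((((measurable_snd.sub measurable_fst).pow_const 2).neg.div_const _).exp).const_mul _
    have := hjoint.lintegral_prod_right' (ν := volume.restrict B)
    simp_rw [gaussianReal_apply _ hv]
    exact this
  have hkernel : Measurable (fun x : ℝ => gaussianReal x v) :=
    Measure.measurable_of_measurable_coe _ (fun B hB => hmeasA hB)
  have hQiA : Qi A = ∫⁻ p, gaussianReal p.1 v A ∂μc := by
    rw [hQi, Measure.bind_apply hA hkernel.aemeasurable, ← hfst,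
      lintegral_map (hmeasA hA) measurable_fst]
  have hQjA : Qj A = ∫⁻ p, gaussianReal p.2 v A ∂μc := by
    rw [hQj, Measure.bind_apply hA hkernel.aemeasurable, ← hsnd,
      lintegral_map (hmeasA hA) measurable_snd]
  have hm1 : Measurable (fun p : ℝ × ℝ => gaussianReal p.1 v A) := (hmeasA hA).comp measurable_fst
  have hm2 : Measurable (fun p : ℝ × ℝ => gaussianReal p.2 v A) := (hmeasA hA).comp measurable_snd
  constructor
  · calc Qi A = ∫⁻ p, gaussianReal p.1 v A ∂μc := hQiA
      _ ≤ ∫⁻ p, (ENNReal.ofReal (Real.exp ε) * gaussianReal p.2 v A + ENNReal.ofReal δ) ∂μc := by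
          refine lintegral_mono_ae (hsupp.mono fun p hp => ?_)
          exact pointwise_priv hε hΔ hσ hτdef hτ htail hp hA
      _ = ENNReal.ofReal (Real.exp ε) * (∫⁻ p, gaussianReal p.2 v A ∂μc) + ENNReal.ofReal δ := by
          rw [lintegral_add_right _ measurable_const, lintegral_const, measure_univ, mul_one,
            lintegral_const_mul _ hm2]
      _ = ENNReal.ofReal (Real.exp ε) * Qj A + ENNReal.ofReal δ := by rw [hQjA]
  · calc Qj A = ∫⁻ p, gaussianReal p.2 v A ∂μc := hQjA
      _ ≤ ∫⁻ p, (ENNReal.ofReal (Real.exp ε) * gaussianReal p.1 v A + ENNReal.ofReal δ) ∂μc := by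
          refine lintegral_mono_ae (hsupp.mono fun p hp => ?_)
          exact pointwise_priv hε hΔ hσ hτdef hτ htail (abs_sub_comm p.1 p.2 ▸ hp) hA
      _ = ENNReal.ofReal (Real.exp ε) * (∫⁻ p, gaussianReal p.1 v A ∂μc) + ENNReal.ofReal δ := by
          rw [lintegral_add_right _ measurable_const, lintegral_const, measure_univ, mul_one,
            lintegral_const_mul _ hm1]
      _ = ENNReal.ofReal (Real.exp ε) * Qi A + ENNReal.ofReal δ := by rw [hQiA]
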